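/- If G is a connected graph with λ₂(G) ≤ 1 which has neither K₅ nor K_{3,3} as a minor and whose girth equals 6, then G is isomorphic to the cycle C₆ on 6 vertices. -/

import Mathlib

/-- The adjacency matrix of a simple graph over `ℝ` is Hermitian. -/
lemma adjMatrix_isHermitian {V : Type*} [Fintype V] (G : SimpleGraph V)
    [DecidableRel G.Adj] : ((G.adjMatrix ℝ)).IsHermitian := by
  rw [Matrix.IsHermitian, Matrix.conjTranspose_eq_transpose_of_trivial]
  exact G.isSymm_adjMatrix

/-- The number of eigenvalues (counted with multiplicity) of the real adjacency matrix of `G`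
satisfying the predicate `p`. -/
noncomputable def eigCount {V : Type*} [Fintype V] [DecidableEq V]
    (G : SimpleGraph V) (p : ℝ → Prop) : ℕ := by
  classical
  exact (Finset.univ.filter fun i =>
    p ((adjMatrix_isHermitian G).eigenvalues i)).card
/-- `HasMinor G H` : `H` is a minor of `G`, witnessed by a family of pairwise disjoint
nonempty branch sets, each inducing a connected subgraph of `G`, such that every edge of `H`
is realized by an edge of `G` between the corresponding branch sets. -/
def HasMinor {V : Type*} {W : Type*} (G : SimpleGraph V) (H : SimpleGraph W) : Prop :=
  ∃ B : W → Set V,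
    (∀ w, (B w).Nonempty) ∧
    (Pairwise fun w₁ w₂ => Disjoint (B w₁) (B w₂)) ∧
    (∀ w, (G.induce (B w)).Connected) ∧
    (∀ ⦃w₁ w₂⦄, H.Adj w₁ w₂ → ∃ a ∈ B w₁, ∃ b ∈ B w₂, G.Adj a b)

/-- `G` is planar in the sense of Wagner: it has neither `K₅` nor `K_{3,3}` as a minor. -/
def WagnerPlanar {V : Type*} (G : SimpleGraph V) : Prop :=
  ¬ HasMinor G (⊤ : SimpleGraph (Fin 5)) ∧
    ¬ HasMinor G (completeBipartiteGraph (Fin 3) (Fin 3))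

section SpectralHelpers

open Matrix Finset

set_option linter.unusedSectionVars false
set_option linter.unusedVariables false


open Matrix Finset

variable {V : Type*} [Fintype V] [DecidableEq V]

lemma dot_sum_left {ι : Type*} (s : Finset ι) (f : ι → V → ℝ) (w : V → ℝ) :
    (∑ i ∈ s, f i) ⬝ᵥ w = ∑ i ∈ s, f i ⬝ᵥ w := by
  simp only [dotProduct, Finset.sum_apply, Finset.sum_mul]
  exact Finset.sum_comm

lemma dot_sum_right {ι : Type*} (s : Finset ι) (f : ι → V → ℝ) (w : V → ℝ) :
    w ⬝ᵥ (∑ i ∈ s, f i) = ∑ i ∈ s, w ⬝ᵥ f i := by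
  simp only [dotProduct, Finset.sum_apply, Finset.mul_sum]
  exact Finset.sum_comm

lemma quad_eq_sum_eigen (A : Matrix V V ℝ) (hA : A.IsHermitian) (z : V → ℝ) :
    z ⬝ᵥ (A *ᵥ z) =
      ∑ i, hA.eigenvalues i * ((star (hA.eigenvectorUnitary : Matrix V V ℝ) *ᵥ z) i)^2 := by
  set U : Matrix V V ℝ := (hA.eigenvectorUnitary : Matrix V V ℝ) with hU
  have hvm : z ᵥ* U = star U *ᵥ z := by
    rw [Matrix.star_eq_conjTranspose, Matrix.conjTranspose_eq_transpose_of_trivial,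
      Matrix.mulVec_transpose]
  conv_lhs => rw [hA.spectral_theorem]
  rw [Unitary.conjStarAlgAut_apply, ← Matrix.mulVec_mulVec, ← Matrix.mulVec_mulVec, Matrix.dotProduct_mulVec, hvm]
  simp only [dotProduct, Matrix.mulVec_diagonal]
  refine Finset.sum_congr rfl fun i _ => ?_
  simp [hU]
  ring

lemma dot_self_eq_sum_eigen (A : Matrix V V ℝ) (hA : A.IsHermitian) (z : V → ℝ) :
    z ⬝ᵥ z = ∑ i, ((star (hA.eigenvectorUnitary : Matrix V V ℝ) *ᵥ z) i)^2 := by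
  set U : Matrix V V ℝ := (hA.eigenvectorUnitary : Matrix V V ℝ) with hU
  have h1 : U *ᵥ (star U *ᵥ z) = z := by
    rw [Matrix.mulVec_mulVec, (Matrix.mem_unitaryGroup_iff).mp hA.eigenvectorUnitary.2,
      Matrix.one_mulVec]
  have hvm : ∀ w : V → ℝ, w ᵥ* U = star U *ᵥ w := by
    intro w
    rw [Matrix.star_eq_conjTranspose, Matrix.conjTranspose_eq_transpose_of_trivial,
      Matrix.mulVec_transpose]
  conv_lhs => rw [← h1]
  rw [Matrix.dotProduct_mulVec, hvm, Matrix.mulVec_mulVec,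
    (Matrix.mem_unitaryGroup_iff').mp hA.eigenvectorUnitary.2, Matrix.one_mulVec]
  simp [dotProduct, sq]

lemma spec_aux (A : Matrix V V ℝ) (hA : A.IsHermitian)
    (instp : DecidablePred fun i : V => 1 < hA.eigenvalues i)
    (hcard : (@Finset.filter V _ instp Finset.univ).card ≤ 1) (x y : V → ℝ) :
    ∃ a b : ℝ, (a ≠ 0 ∨ b ≠ 0) ∧
      (a • x + b • y) ⬝ᵥ (A *ᵥ (a • x + b • y)) ≤ (a • x + b • y) ⬝ᵥ (a • x + b • y) := by
  classical
  set U : Matrix V V ℝ := (hA.eigenvectorUnitary : Matrix V V ℝ) with hU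
  set c : (V → ℝ) → (V → ℝ) := fun w => star U *ᵥ w with hc
  have hlin : ∀ a b : ℝ, c (a • x + b • y) = a • c x + b • c y := by
    intro a b
    simp [hc, Matrix.mulVec_add, Matrix.mulVec_smul]
  set T := @Finset.filter V _ instp Finset.univ with hT
  -- find a, b with (a,b) ≠ 0 and c z i = 0 for all i ∈ T
  have key : ∃ a b : ℝ, (a ≠ 0 ∨ b ≠ 0) ∧ ∀ i ∈ T, c (a • x + b • y) i = 0 := by
    rcases Finset.eq_empty_or_nonempty T with hemp | ⟨i₀, hi₀⟩
    · exact ⟨1, 0, Or.inl one_ne_zero, by simp [hemp]⟩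
    · have huniq : ∀ j ∈ T, j = i₀ := fun j hj => Finset.card_le_one.mp hcard j hj i₀ hi₀
      by_cases hx0 : c x i₀ = 0
      · refine ⟨1, 0, Or.inl one_ne_zero, fun i hi => ?_⟩
        rw [huniq i hi, hlin]
        simp [hx0]
      · refine ⟨c y i₀, -(c x i₀), Or.inr (neg_ne_zero.mpr hx0), fun i hi => ?_⟩
        rw [huniq i hi, hlin]
        simp only [Pi.add_apply, Pi.smul_apply, smul_eq_mul]
        ring
  obtain ⟨a, b, hab, hzero⟩ := key
  refine ⟨a, b, hab, ?_⟩
  rw [quad_eq_sum_eigen A hA, dot_self_eq_sum_eigen A hA]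
  refine Finset.sum_le_sum fun i _ => ?_
  by_cases hi : 1 < hA.eigenvalues i
  · have : c (a • x + b • y) i = 0 := hzero i (by simp [hT, hi])
    have hcc : (star U *ᵥ (a • x + b • y)) i = 0 := this
    rw [hcc]
    simp
  · push_neg at hi
    have h2 : (0:ℝ) ≤ ((star U *ᵥ (a • x + b • y)) i)^2 := sq_nonneg _
    nlinarith





lemma dot_sum_left' {ι : Type*} (s : Finset ι) (f : ι → V → ℝ) (w : V → ℝ) :
    (∑ i ∈ s, f i) ⬝ᵥ w = ∑ i ∈ s, f i ⬝ᵥ w := by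
  simp only [dotProduct, Finset.sum_apply, Finset.sum_mul]
  exact Finset.sum_comm

lemma dot_sum_right' {ι : Type*} (s : Finset ι) (f : ι → V → ℝ) (w : V → ℝ) :
    w ⬝ᵥ (∑ i ∈ s, f i) = ∑ i ∈ s, w ⬝ᵥ f i := by
  simp only [dotProduct, Finset.sum_apply, Finset.mul_sum]
  exact Finset.sum_comm

/-- adjacency of the 7-vertex graph: 6-cycle (0..5) plus pendant 6 attached to 0 -/
def adj7 (i j : Fin 7) : Prop :=
  ((i:ℕ) < 6 ∧ (j:ℕ) < 6 ∧ ((j:ℕ) = ((i:ℕ)+1) % 6 ∨ (i:ℕ) = ((j:ℕ)+1) % 6)) ∨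
    ((i:ℕ) = 6 ∧ (j:ℕ) = 0) ∨ ((i:ℕ) = 0 ∧ (j:ℕ) = 6)

instance : DecidableRel adj7 := fun _ _ => by unfold adj7; infer_instance

noncomputable def BH : Fin 7 → Fin 7 → ℝ := fun i j => if adj7 i j then 1 else 0

def Xv : Fin 7 → ℝ := ![20,16,14,13,14,16,10]
def Yv : Fin 7 → ℝ := ![-18,-4,13,20,13,-4,-14]

lemma quad_expand (A : Matrix V V ℝ) (f : Fin 7 → V) (c : Fin 7 → ℝ) :
    (∑ i, c i • (Pi.single (f i) 1 : V → ℝ)) ⬝ᵥ (A *ᵥ (∑ i, c i • (Pi.single (f i) 1 : V → ℝ)))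
      = ∑ i, ∑ j, c i * c j * A (f i) (f j) := by
  rw [dot_sum_left']
  refine Finset.sum_congr rfl fun i _ => ?_
  rw [smul_dotProduct, single_dotProduct, one_mul]
  have : (A *ᵥ ∑ j, c j • (Pi.single (f j) 1 : V → ℝ)) (f i)
      = A (f i) ⬝ᵥ (∑ j, c j • (Pi.single (f j) 1 : V → ℝ)) := rfl
  rw [this, dot_sum_right', Finset.smul_sum]
  refine Finset.sum_congr rfl fun j _ => ?_
  rw [dotProduct_smul, dotProduct_single, mul_one, smul_eq_mul, smul_eq_mul]
  ring

lemma dot_expand (f : Fin 7 → V) (hinj : Function.Injective f) (c : Fin 7 → ℝ) :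
    (∑ i, c i • (Pi.single (f i) 1 : V → ℝ)) ⬝ᵥ (∑ i, c i • (Pi.single (f i) 1 : V → ℝ))
      = ∑ i, (c i)^2 := by
  rw [dot_sum_left']
  refine Finset.sum_congr rfl fun i _ => ?_
  rw [smul_dotProduct, single_dotProduct, one_mul, Finset.sum_apply]
  have : ∀ j, (c j • (Pi.single (f j) 1 : V → ℝ)) (f i) = if j = i then c j else 0 := by
    intro j
    by_cases h : j = i
    · subst h; simp
    · have : f i ≠ f j := fun hh => h (hinj hh.symm)
      simp [Pi.single_apply, this.symm, h]
  rw [Finset.sum_congr rfl fun j _ => this j]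
  simp [sq]

lemma quad_value (A : Matrix V V ℝ) (f : Fin 7 → V) (hinj : Function.Injective f)
    (hB : ∀ i j, A (f i) (f j) = BH i j) (a b : ℝ) :
    (∑ i, (a * Xv i + b * Yv i) • (Pi.single (f i) 1 : V → ℝ)) ⬝ᵥ
        (A *ᵥ (∑ i, (a * Xv i + b * Yv i) • (Pi.single (f i) 1 : V → ℝ)))
      = (∑ i, (a * Xv i + b * Yv i) • (Pi.single (f i) 1 : V → ℝ)) ⬝ᵥ
          (∑ i, (a * Xv i + b * Yv i) • (Pi.single (f i) 1 : V → ℝ))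
        + (1731*a^2 + 20*(a*b) + 334*b^2) := by
  rw [quad_expand A f, dot_expand f hinj]
  simp only [hB]
  norm_num [Fin.sum_univ_succ, BH, adj7, Xv, Yv, Fin.isValue]
  ring

lemma aux_two_le (G : SimpleGraph V) (inst : DecidableRel G.Adj)
    (instp : DecidablePred fun i : V =>
      1 < (@adjMatrix_isHermitian V _ G inst).eigenvalues i)
    (f : Fin 7 → V) (hinj : Function.Injective f)
    (hadj : ∀ i j, G.Adj (f i) (f j) ↔ adj7 i j) :
    2 ≤ (@Finset.filter V _ instp Finset.univ).card := by
  letI := inst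
  by_contra hcon
  push_neg at hcon
  have hcard : (@Finset.filter V _ instp Finset.univ).card ≤ 1 := by omega
  set A : Matrix V V ℝ := G.adjMatrix ℝ with hA
  have hB : ∀ i j, A (f i) (f j) = BH i j := by
    intro i j
    by_cases h : G.Adj (f i) (f j)
    · rw [hA, SimpleGraph.adjMatrix_apply, if_pos h, BH, if_pos ((hadj i j).mp h)]
    · rw [hA, SimpleGraph.adjMatrix_apply, if_neg h, BH,
        if_neg (fun ha => h ((hadj i j).mpr ha))]
  obtain ⟨a, b, hab, hle⟩ := spec_aux A (adjMatrix_isHermitian G) instp hcard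
    (∑ i, Xv i • (Pi.single (f i) 1 : V → ℝ)) (∑ i, Yv i • (Pi.single (f i) 1 : V → ℝ))
  have hz : a • (∑ i, Xv i • (Pi.single (f i) 1 : V → ℝ))
      + b • (∑ i, Yv i • (Pi.single (f i) 1 : V → ℝ))
      = ∑ i, (a * Xv i + b * Yv i) • (Pi.single (f i) 1 : V → ℝ) := by
    rw [Finset.smul_sum, Finset.smul_sum, ← Finset.sum_add_distrib]
    refine Finset.sum_congr rfl fun i _ => ?_
    rw [smul_smul, smul_smul, ← add_smul]
  rw [hz, quad_value A f hinj hB a b] at hle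
  have hQ : (0:ℝ) < 1731*a^2 + 20*(a*b) + 334*b^2 := by
    by_cases hb : b = 0
    · have ha : a ≠ 0 := by rcases hab with h | h; exact h; exact absurd hb h
      subst hb
      have := sq_pos_of_ne_zero ha
      nlinarith
    · have := sq_pos_of_ne_zero hb
      nlinarith [sq_nonneg (1731*a + 10*b)]
  linarith

lemma two_le_eigCount (G : SimpleGraph V) (f : Fin 7 → V) (hinj : Function.Injective f)
    (hadj : ∀ i j, G.Adj (f i) (f j) ↔ adj7 i j) :
    2 ≤ eigCount G (fun t => 1 < t) := by
  unfold eigCount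
  exact aux_two_le G _ _ f hinj hadj

end SpectralHelpers

section CombHelpers

open Matrix Finset SimpleGraph

set_option linter.unusedSectionVars false
set_option linter.unusedVariables false




variable {V : Type*} (G : SimpleGraph V)

lemma cycle_ge_six (hg : G.egirth = 6) {a : V} {w : G.Walk a a} (hw : w.IsCycle) :
    6 ≤ w.length := by
  have h : (6 : ℕ∞) ≤ G.egirth := le_of_eq hg.symm
  have := SimpleGraph.le_egirth.mp h a w hw
  exact_mod_cast this

lemma no_cycle3 (hg : G.egirth = 6) {a b c : V}
    (hab : G.Adj a b) (hbc : G.Adj b c) (hca : G.Adj c a) : False := by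
  have hac : a ≠ c := hca.ne'
  set w : G.Walk a a := .cons hab (.cons hbc (.cons hca .nil)) with hw
  have hcyc : w.IsCycle := by
    rw [SimpleGraph.Walk.isCycle_def]
    refine ⟨?_, by simp [hw], ?_⟩
    · rw [SimpleGraph.Walk.isTrail_def]
      simp [hw, Sym2.eq_iff, hab.ne, hbc.ne, hca.ne, hab.ne', hbc.ne', hca.ne', hac]
      try tauto
    · simp [hw, hbc.ne, hca.ne', hac]
      exact ⟨hab.ne', hca.ne⟩
  have := cycle_ge_six G hg hcyc
  simp [hw] at this
lemma no_cycle4 (hg : G.egirth = 6) {a b c d : V} (hac : a ≠ c) (hbd : b ≠ d)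
    (hab : G.Adj a b) (hbc : G.Adj b c) (hcd : G.Adj c d) (hda : G.Adj d a) : False := by
  set w : G.Walk a a := .cons hab (.cons hbc (.cons hcd (.cons hda .nil))) with hw
  have hcyc : w.IsCycle := by
    rw [SimpleGraph.Walk.isCycle_def]
    refine ⟨?_, by simp [hw], ?_⟩
    · rw [SimpleGraph.Walk.isTrail_def]
      simp [hw, Sym2.eq_iff, hab.ne, hbc.ne, hcd.ne, hda.ne, hab.ne', hbc.ne', hcd.ne',
        hda.ne', hac, hbd, hac.symm, hbd.symm]
      try tauto
    · simp [hw, hbc.ne, hcd.ne, hda.ne, hda.ne', hbd]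
      exact ⟨hab.ne', Ne.symm hac⟩
  have := cycle_ge_six G hg hcyc
  simp [hw] at this
lemma no_cycle5 (hg : G.egirth = 6) {a b c d e : V}
    (hac : a ≠ c) (had : a ≠ d) (hbd : b ≠ d) (hbe : b ≠ e) (hce : c ≠ e)
    (hab : G.Adj a b) (hbc : G.Adj b c) (hcd : G.Adj c d) (hde : G.Adj d e)
    (hea : G.Adj e a) : False := by
  set w : G.Walk a a := .cons hab (.cons hbc (.cons hcd (.cons hde (.cons hea .nil)))) with hw
  have hcyc : w.IsCycle := by
    rw [SimpleGraph.Walk.isCycle_def]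
    refine ⟨?_, by simp [hw], ?_⟩
    · rw [SimpleGraph.Walk.isTrail_def]
      simp [hw, Sym2.eq_iff, hab.ne, hbc.ne, hcd.ne, hde.ne, hea.ne, hab.ne', hbc.ne',
        hcd.ne', hde.ne', hea.ne', hac, had, hbd, hbe, hce, hac.symm, had.symm, hbd.symm,
        hbe.symm, hce.symm]
      try tauto
    · simp [hw, hbc.ne, hcd.ne, hde.ne, hea.ne, hea.ne', hbd, hbe, hce, hac.symm, had.symm]
      exact hab.ne'
  have := cycle_ge_six G hg hcyc
  simp [hw] at this

lemma getVert_eq_support_getElem {u v : V} (p : G.Walk u v) (i : ℕ)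
    (h : i < p.support.length) : p.getVert i = p.support[i] := by
  induction p generalizing i with
  | nil => simp at h; simp [h]
  | cons hadj q ih =>
    match i with
    | 0 => simp
    | (n+1) =>
      rw [SimpleGraph.Walk.getVert_cons_succ]
      simp only [SimpleGraph.Walk.support_cons, List.getElem_cons_succ]
      exact ih n (by simpa [SimpleGraph.Walk.support_cons] using h)

lemma walk_boundary {S : Set V} : ∀ {x y : V} (p : G.Walk x y), x ∉ S → y ∈ S →
    ∃ a b, a ∉ S ∧ b ∈ S ∧ G.Adj a b := by
  intro x y p
  induction p with
  | nil => intro hx hy; exact absurd hy hx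
  | @cons u m _ h q ih =>
    intro hx hy
    by_cases hm : m ∈ S
    · exact ⟨u, m, hx, hm, h⟩
    · exact ih hm hy

end CombHelpers

/-- a connected graph `G` with `λ₂(G) ≤ 1` having neither `K₅` nor `K_{3,3}`
as a minor and with girth `6` is isomorphic to the cycle `C₆`. -/
theorem girth_six_implies_C6 {V : Type*} [Fintype V] [DecidableEq V] (G : SimpleGraph V)
    (hconn : G.Connected) (hl : eigCount G (fun t => 1 < t) ≤ 1)
    (hplanar : WagnerPlanar G) (hgirth : G.egirth = 6) :
    Nonempty (G ≃g SimpleGraph.cycleGraph 6) := by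
  classical
  -- extract a 6-cycle
  have hnac : ¬ G.IsAcyclic := by
    intro h
    rw [h.egirth_eq_top] at hgirth
    exact (by decide : (⊤:ℕ∞) ≠ 6) hgirth
  obtain ⟨a, w, hcyc, hlen'⟩ := SimpleGraph.exists_egirth_eq_length.mpr hnac
  have hlen : w.length = 6 := by
    rw [hgirth] at hlen'
    exact_mod_cast hlen'.symm
  set v : Fin 6 → V := fun i => w.getVert i.val with hv
  have hsupl : w.support.length = 7 := by
    rw [SimpleGraph.Walk.length_support, hlen]
  have htail : w.support.tail.Nodup := ((SimpleGraph.Walk.isCycle_def w).mp hcyc).2.2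
  have htl : w.support.tail.length = 6 := by
    rw [List.length_tail, hsupl]
  have hgv6 : w.getVert 6 = a := by
    rw [← hlen]
    exact w.getVert_length
  have hveq : ∀ i : Fin 6, v i = w.support.tail[(i.val + 5) % 6]'(by omega) := by
    intro i
    have hidx : ∀ k : ℕ, (hk : k < 6) →
        w.support.tail[k]'(by omega) = w.support[k+1]'(by omega) := by
      intro k hk
      rw [List.getElem_tail]
    by_cases h0 : i.val = 0
    · rw [hidx _ (by omega)]
      show v i = w.support[(i.val + 5) % 6 + 1]'(by omega)
      have h6 : (i.val + 5) % 6 + 1 = 6 := by omega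
      simp only [h6]
      rw [← getVert_eq_support_getElem G w 6 (by omega), hgv6, hv]
      simp [h0]
    · rw [hidx _ (by omega)]
      show v i = w.support[(i.val + 5) % 6 + 1]'(by omega)
      have h6 : (i.val + 5) % 6 + 1 = i.val := by omega
      simp only [h6]
      exact getVert_eq_support_getElem G w i.val (by omega)
  have hvinj : Function.Injective v := by
    intro i j h
    rw [hveq i, hveq j] at h
    have := (List.Nodup.getElem_inj_iff htail).mp h
    have hi := i.isLt
    have hj := j.isLt
    exact Fin.ext (by omega)
  have hvadj : ∀ i : Fin 6, G.Adj (v i) (v (i + 1)) := by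
    intro i
    have hadd : ((i + 1 : Fin 6)).val = (i.val + 1) % 6 := by
      rw [Fin.val_add]
      norm_num
    show G.Adj (w.getVert i.val) (w.getVert ((i+1 : Fin 6)).val)
    rw [hadd]
    by_cases h5 : i.val = 5
    · have h0 : (i.val + 1) % 6 = 0 := by omega
      rw [h0, h5]
      have h := w.adj_getVert_succ (by omega : 5 < w.length)
      rw [show (5+1) = 6 by norm_num, hgv6] at h
      rwa [w.getVert_zero]
    · have h1 : (i.val + 1) % 6 = i.val + 1 := by have := i.isLt; omega
      rw [h1]
      exact w.adj_getVert_succ (by have := i.isLt; omega)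
  have hne6 : ∀ i j : Fin 6, i ≠ j → v i ≠ v j := fun i j h hh => h (hvinj hh)
  have hvadj2 : ∀ i : Fin 6, G.Adj (v (i + 1)) (v (i + 2)) := by
    intro i
    have h := hvadj (i + 1)
    rwa [show i + 1 + 1 = i + 2 from (by decide : ∀ i : Fin 6, i + 1 + 1 = i + 2) i] at h
  have hvadj3 : ∀ i : Fin 6, G.Adj (v (i + 2)) (v (i + 3)) := by
    intro i
    have h := hvadj (i + 2)
    rwa [show i + 2 + 1 = i + 3 from (by decide : ∀ i : Fin 6, i + 2 + 1 = i + 3) i] at h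
  have hchord : ∀ i j : Fin 6, G.Adj (v i) (v j) → j = i + 1 ∨ i = j + 1 := by
    intro i j hadj
    by_contra hcon
    push_neg at hcon
    obtain ⟨h1, h2⟩ := hcon
    have hij : i ≠ j := fun h => G.loopless.irrefl _ (h ▸ hadj)
    have hcase : j = i + 2 ∨ j = i + 3 ∨ j = i + 4 :=
      (by decide : ∀ i j : Fin 6, i ≠ j → j ≠ i + 1 → i ≠ j + 1 →
        (j = i + 2 ∨ j = i + 3 ∨ j = i + 4)) i j hij h1 h2
    rcases hcase with h | h | h
    · subst h
      exact no_cycle3 G hgirth (hvadj i) (hvadj2 i) hadj.symm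
    · subst h
      exact no_cycle4 G hgirth
        (hne6 i (i + 2) ((by decide : ∀ i : Fin 6, i ≠ i + 2) i))
        (hne6 (i + 1) (i + 3) ((by decide : ∀ i : Fin 6, i + 1 ≠ i + 3) i))
        (hvadj i) (hvadj2 i) (hvadj3 i) hadj.symm
    · have hji : i = j + 2 :=
        (by decide : ∀ i j : Fin 6, j = i + 4 → i = j + 2) i j h
      subst hji
      exact no_cycle3 G hgirth (hvadj j) (hvadj2 j) hadj
  by_cases hall : ∀ x : V, ∃ i : Fin 6, v i = x
  · -- G is exactly the 6-cycle
    have hbij : Function.Bijective v := ⟨hvinj, fun x => hall x⟩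
    have hmap : ∀ i j : Fin 6, G.Adj (v i) (v j) ↔ (SimpleGraph.cycleGraph 6).Adj i j := by
      intro i j
      rw [SimpleGraph.cycleGraph_adj']
      constructor
      · intro h
        rcases hchord i j h with h | h
        · right
          rw [h]
          have : ∀ i : Fin 6, (i + 1 - i).val = 1 := by decide
          exact this i
        · left
          rw [h]
          have : ∀ j : Fin 6, (j + 1 - j).val = 1 := by decide
          exact this j
      · intro h
        rcases h with h | h
        · have : i = j + 1 := by
            revert h; revert i j; decide
          rw [this]
          exact (hvadj j).symm
        · have : j = i + 1 := by
            revert h; revert i j; decide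
          rw [this]
          exact hvadj i
    exact ⟨(SimpleGraph.Iso.symm
      { toEquiv := Equiv.ofBijective v hbij,
        map_rel_iff' := fun {i j} => hmap i j })⟩
  · -- there is a vertex outside the cycle : contradiction with eigenvalue bound
    exfalso
    push_neg at hall
    obtain ⟨x0, hx0⟩ := hall
    have hx0S : x0 ∉ Set.range v := by
      rintro ⟨i, hi⟩
      exact hx0 i hi
    obtain ⟨u0, b0, hu0S, hb0S, hadj0⟩ :=
      walk_boundary G ((hconn.preconnected x0 (v 0)).some) hx0S ⟨0, rfl⟩
    obtain ⟨k, hk⟩ := hb0S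
    set v' : Fin 6 → V := fun i => v (k + i) with hv'
    have hu' : ∀ i : Fin 6, u0 ≠ v' i := by
      intro i h
      exact hu0S ⟨k + i, h.symm⟩
    have hvinj' : Function.Injective v' := fun i j h => add_left_cancel (hvinj h)
    have hvadj' : ∀ i : Fin 6, G.Adj (v' i) (v' (i + 1)) := by
      intro i
      show G.Adj (v (k + i)) (v (k + (i + 1)))
      rw [← add_assoc]
      exact hvadj (k + i)
    have hchord' : ∀ i j : Fin 6, G.Adj (v' i) (v' j) → j = i + 1 ∨ i = j + 1 := by
      intro i j h
      rcases hchord (k + i) (k + j) h with hh | hh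
      · left
        rw [add_assoc] at hh
        exact add_left_cancel hh
      · right
        rw [add_assoc] at hh
        exact add_left_cancel hh
    have hnotadj : ∀ i j : Fin 6, j ≠ i + 1 → i ≠ j + 1 → ¬ G.Adj (v' i) (v' j) :=
      fun i j h1 h2 h => ((hchord' i j h).elim h1 h2)
    have hu0 : G.Adj u0 (v' 0) := by
      have : v' 0 = v k := by
        show v (k + 0) = v k
        rw [add_zero]
      rw [this, hk]
      exact hadj0
    have E01 : G.Adj (v' 0) (v' 1) := by have h := hvadj' 0; rwa [show (0:Fin 6)+1 = 1 by decide] at h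
    have E12 : G.Adj (v' 1) (v' 2) := by have h := hvadj' 1; rwa [show (1:Fin 6)+1 = 2 by decide] at h
    have E23 : G.Adj (v' 2) (v' 3) := by have h := hvadj' 2; rwa [show (2:Fin 6)+1 = 3 by decide] at h
    have E34 : G.Adj (v' 3) (v' 4) := by have h := hvadj' 3; rwa [show (3:Fin 6)+1 = 4 by decide] at h
    have E45 : G.Adj (v' 4) (v' 5) := by have h := hvadj' 4; rwa [show (4:Fin 6)+1 = 5 by decide] at h
    have E50 : G.Adj (v' 5) (v' 0) := by have h := hvadj' 5; rwa [show (5:Fin 6)+1 = 0 by decide] at h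
    have hne' : ∀ i j : Fin 6, i ≠ j → v' i ≠ v' j := fun i j hne h => hne (hvinj' h)
    have hnu1 : ¬ G.Adj u0 (v' 1) := fun h => no_cycle3 G hgirth hu0 E01 h.symm
    have hnu2 : ¬ G.Adj u0 (v' 2) := fun h =>
      no_cycle4 G hgirth (hu' 1) (hne' 0 2 (by decide)) hu0 E01 E12 h.symm
    have hnu3 : ¬ G.Adj u0 (v' 3) := fun h =>
      no_cycle5 G hgirth (hu' 1) (hu' 2) (hne' 0 2 (by decide)) (hne' 0 3 (by decide))
        (hne' 1 3 (by decide)) hu0 E01 E12 E23 h.symm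
    have hnu4 : ¬ G.Adj u0 (v' 4) := fun h =>
      no_cycle4 G hgirth (hu' 5) (hne' 4 0 (by decide)) h E45 E50 hu0.symm
    have hnu5 : ¬ G.Adj u0 (v' 5) := fun h => no_cycle3 G hgirth h E50 hu0.symm
    set F : Fin 7 → V := fun i => if h : (i:ℕ) < 6 then v' ⟨(i:ℕ), h⟩ else u0 with hF
    have hFinj : Function.Injective F := by
      intro i j hij
      by_cases hi : (i:ℕ) < 6 <;> by_cases hj : (j:ℕ) < 6
      · rw [hF] at hij
        simp only [dif_pos hi, dif_pos hj] at hij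
        have := hvinj' hij
        exact Fin.ext (by simpa [Fin.ext_iff] using this)
      · rw [hF] at hij
        simp only [dif_pos hi, dif_neg hj] at hij
        exact absurd hij.symm (hu' _)
      · rw [hF] at hij
        simp only [dif_neg hi, dif_pos hj] at hij
        exact absurd hij (hu' _)
      · have hi6 := i.isLt
        have hj6 := j.isLt
        exact Fin.ext (by omega)
    have hFadj : ∀ i j : Fin 7, G.Adj (F i) (F j) ↔ adj7 i j := by
      intro i j
      fin_cases i <;> fin_cases j
      · exact iff_of_false (G.loopless.irrefl _) (by decide)
      · exact iff_of_true E01 (by decide)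
      · exact iff_of_false (hnotadj 0 2 (by decide) (by decide)) (by decide)
      · exact iff_of_false (hnotadj 0 3 (by decide) (by decide)) (by decide)
      · exact iff_of_false (hnotadj 0 4 (by decide) (by decide)) (by decide)
      · exact iff_of_true (E50).symm (by decide)
      · exact iff_of_true hu0.symm (by decide)
      · exact iff_of_true (E01).symm (by decide)
      · exact iff_of_false (G.loopless.irrefl _) (by decide)
      · exact iff_of_true E12 (by decide)
      · exact iff_of_false (hnotadj 1 3 (by decide) (by decide)) (by decide)
      · exact iff_of_false (hnotadj 1 4 (by decide) (by decide)) (by decide)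
      · exact iff_of_false (hnotadj 1 5 (by decide) (by decide)) (by decide)
      · exact iff_of_false (fun h => hnu1 h.symm) (by decide)
      · exact iff_of_false (hnotadj 2 0 (by decide) (by decide)) (by decide)
      · exact iff_of_true (E12).symm (by decide)
      · exact iff_of_false (G.loopless.irrefl _) (by decide)
      · exact iff_of_true E23 (by decide)
      · exact iff_of_false (hnotadj 2 4 (by decide) (by decide)) (by decide)
      · exact iff_of_false (hnotadj 2 5 (by decide) (by decide)) (by decide)
      · exact iff_of_false (fun h => hnu2 h.symm) (by decide)
      · exact iff_of_false (hnotadj 3 0 (by decide) (by decide)) (by decide)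
      · exact iff_of_false (hnotadj 3 1 (by decide) (by decide)) (by decide)
      · exact iff_of_true (E23).symm (by decide)
      · exact iff_of_false (G.loopless.irrefl _) (by decide)
      · exact iff_of_true E34 (by decide)
      · exact iff_of_false (hnotadj 3 5 (by decide) (by decide)) (by decide)
      · exact iff_of_false (fun h => hnu3 h.symm) (by decide)
      · exact iff_of_false (hnotadj 4 0 (by decide) (by decide)) (by decide)
      · exact iff_of_false (hnotadj 4 1 (by decide) (by decide)) (by decide)
      · exact iff_of_false (hnotadj 4 2 (by decide) (by decide)) (by decide)
      · exact iff_of_true (E34).symm (by decide)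
      · exact iff_of_false (G.loopless.irrefl _) (by decide)
      · exact iff_of_true E45 (by decide)
      · exact iff_of_false (fun h => hnu4 h.symm) (by decide)
      · exact iff_of_true E50 (by decide)
      · exact iff_of_false (hnotadj 5 1 (by decide) (by decide)) (by decide)
      · exact iff_of_false (hnotadj 5 2 (by decide) (by decide)) (by decide)
      · exact iff_of_false (hnotadj 5 3 (by decide) (by decide)) (by decide)
      · exact iff_of_true (E45).symm (by decide)
      · exact iff_of_false (G.loopless.irrefl _) (by decide)
      · exact iff_of_false (fun h => hnu5 h.symm) (by decide)
      · exact iff_of_true hu0 (by decide)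
      · exact iff_of_false hnu1 (by decide)
      · exact iff_of_false hnu2 (by decide)
      · exact iff_of_false hnu3 (by decide)
      · exact iff_of_false hnu4 (by decide)
      · exact iff_of_false hnu5 (by decide)
      · exact iff_of_false (G.loopless.irrefl _) (by decide)
    have := two_le_eigCount G F hFinj hFadj
    omega
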